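/- Let R be a reduced crystallographic root system with simple roots S, let I be a subset of S, and let w_{0,P} be the longest element of the subgroup W_P of the Weyl group generated by the simple reflections s_α, α ∈ I. For β ∈ R⁺ \ R_I⁺, one has ⟨Σ_{α ∈ I} ϖ_α − Σ_{γ ∈ R_I⁺} γ , β∨⟩ = 0 if and only if w_{0,P}(β) ∈ R_{S\I}⁺ (i.e., w_{0,P}(β) is a positive root lying in the span of the simple roots not in I). -/

import Mathlib

/-!
Common setup: a reduced crystallographic root system realized in a real inner
product space, together with a chosen set of simple roots.  For a root `α`,
`cpair v α = ⟨v, α∨⟩ = 2⟪v,α⟫/⟪α,α⟫` is the pairing with the coroot `α∨`, and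
`sref α` is the reflection in `α`.
-/

open scoped RealInnerProductSpace
open Finset

/-- `cpair v α = ⟨v, α∨⟩ = 2⟪v,α⟫/⟪α,α⟫`, the pairing of `v` with the coroot of `α`. -/
noncomputable def cpair {V : Type*} [NormedAddCommGroup V] [InnerProductSpace ℝ V]
    (v α : V) : ℝ := 2 * ⟪v, α⟫ / ⟪α, α⟫

/-- The reflection in the root `α`: `v ↦ v - ⟨v, α∨⟩ α`. -/
noncomputable def sref {V : Type*} [NormedAddCommGroup V] [InnerProductSpace ℝ V]
    (α : V) : V → V := fun v => v - cpair v α • α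

/-- A reduced crystallographic root system in a real inner product space,
with a chosen set of simple roots (every root is an integral linear combination
of the simple roots, with coefficients all nonnegative or all nonpositive). -/
structure RCRS (V : Type*) [NormedAddCommGroup V] [InnerProductSpace ℝ V] where
  roots : Finset V
  zero_not_mem : (0 : V) ∉ roots
  crystallographic : ∀ α ∈ roots, ∀ β ∈ roots, ∃ n : ℤ, cpair β α = (n : ℝ)
  reflect_mem : ∀ α ∈ roots, ∀ β ∈ roots, sref α β ∈ roots
  reduced : ∀ α ∈ roots, ∀ t : ℝ, t • α ∈ roots → t = 1 ∨ t = -1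
  simple : Finset V
  simple_subset : simple ⊆ roots
  simple_indep : LinearIndependent ℝ ((↑) : simple → V)
  exists_coeffs : ∀ β ∈ roots, ∃ c : V → ℤ,
    ((∀ α ∈ simple, 0 ≤ c α) ∨ (∀ α ∈ simple, c α ≤ 0)) ∧
    β = ∑ α ∈ simple, (c α : ℝ) • α

namespace RCRS

variable {V : Type*} [NormedAddCommGroup V] [InnerProductSpace ℝ V] [DecidableEq V] (Φ : RCRS V)

open Classical in
/-- `R⁺`: the set of positive roots, i.e. the roots that are nonnegative integral
linear combinations of simple roots. -/
noncomputable def posRoots : Finset V :=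
  Φ.roots.filter (fun β => ∃ c : V → ℤ, (∀ α ∈ Φ.simple, 0 ≤ c α) ∧
    β = ∑ α ∈ Φ.simple, (c α : ℝ) • α)

open Classical in
/-- `R_I⁺`: the set of positive roots that are integral linear combinations of the
simple roots belonging to `I`. -/
noncomputable def posRootsOf (I : Finset V) : Finset V :=
  Φ.posRoots.filter (fun β => ∃ c : V → ℤ, β = ∑ α ∈ I, (c α : ℝ) • α)

/-- `ρ`: the half sum of the positive roots. -/
noncomputable def rho : V := (2 : ℝ)⁻¹ • ∑ β ∈ Φ.posRoots, β

/-- `ρ^P`: the half sum of the positive roots that are not in `R_I⁺`. -/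
noncomputable def rhoP (I : Finset V) : V :=
  (2 : ℝ)⁻¹ • ∑ β ∈ Φ.posRoots \ Φ.posRootsOf I, β

/-- `ϖ` is a system of fundamental weights: `⟨ϖ α, β∨⟩ = δ_{α β}` for simple `α`, `β`. -/
def IsFundamentalWeights (ϖ : V → V) : Prop :=
  ∀ α ∈ Φ.simple, ∀ β ∈ Φ.simple, cpair (ϖ α) β = if α = β then 1 else 0

/-- The product of the reflections in the roots listed in `l`
(`wordProd [α₁, …, α_N] = s_{α₁} ∘ ⋯ ∘ s_{α_N}`). -/
noncomputable def wordProd : List V → (V → V) :=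
  fun l => l.foldr (fun α f => sref α ∘ f) id

/-- Membership in the subgroup of the Weyl group generated by the reflections
`s_α`, `α ∈ I`. -/
def MemWeyl (I : Finset V) (w : V → V) : Prop :=
  ∃ l : List V, (∀ α ∈ l, α ∈ I) ∧ w = wordProd l

/-- The length of `w` with respect to the generators `s_α`, `α ∈ I`. -/
noncomputable def lengthWeyl (I : Finset V) (w : V → V) : ℕ :=
  sInf {n | ∃ l : List V, l.length = n ∧ (∀ α ∈ l, α ∈ I) ∧ w = wordProd l}

/-- `w` is the longest element of the subgroup generated by the reflections
`s_α`, `α ∈ I`. -/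
def IsLongest (I : Finset V) (w : V → V) : Prop :=
  MemWeyl I w ∧ ∀ u, MemWeyl I u → lengthWeyl I u ≤ lengthWeyl I w

end RCRS

section Basics
variable {V : Type*} [NormedAddCommGroup V] [InnerProductSpace ℝ V]

variable {V : Type*} [NormedAddCommGroup V] [InnerProductSpace ℝ V]

lemma cpair_add_left (a b γ : V) : cpair (a + b) γ = cpair a γ + cpair b γ := by
  simp [cpair, inner_add_left]; ring

lemma cpair_smul_left (r : ℝ) (a γ : V) : cpair (r • a) γ = r * cpair a γ := by
  simp [cpair, inner_smul_left]; ring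

lemma cpair_sub_left (a b γ : V) : cpair (a - b) γ = cpair a γ - cpair b γ := by
  simp [cpair, inner_sub_left]; ring

lemma cpair_sum_left {ι : Type*} (s : Finset ι) (f : ι → V) (γ : V) :
    cpair (∑ i ∈ s, f i) γ = ∑ i ∈ s, cpair (f i) γ := by
  classical
  induction s using Finset.induction with
  | empty => simp [cpair]
  | insert a s' h ih => simp [Finset.sum_insert h, cpair_add_left, ih]

lemma cpair_self {γ : V} (h : γ ≠ 0) : cpair γ γ = 2 := by
  have : ⟪γ, γ⟫ ≠ 0 := by simpa [inner_self_eq_zero] using h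
  unfold cpair; rw [mul_div_assoc, div_self this, mul_one]

lemma cpair_of_inner_zero {v γ : V} (h : ⟪v, γ⟫ = 0) : cpair v γ = 0 := by
  simp [cpair, h]

lemma sref_apply (α v : V) : sref α v = v - cpair v α • α := rfl

lemma sref_fix {v α : V} (h : ⟪v, α⟫ = 0) : sref α v = v := by
  simp [sref, cpair_of_inner_zero h]

lemma sref_self {α : V} (h : α ≠ 0) : sref α α = -α := by
  rw [sref_apply, cpair_self h]; module

lemma inner_sref_sref {α : V} (h : α ≠ 0) (u v : V) :
    ⟪sref α u, sref α v⟫ = ⟪u, v⟫ := by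
  have hα : ⟪α, α⟫ ≠ 0 := by simpa [inner_self_eq_zero] using h
  simp only [sref, cpair, inner_sub_left, inner_sub_right, inner_smul_left, inner_smul_right,
    RCLike.conj_to_real]
  rw [real_inner_comm α u, real_inner_comm α v]
  field_simp
  ring

lemma sref_sref {α : V} (h : α ≠ 0) (v : V) : sref α (sref α v) = v := by
  have hα : ⟪α, α⟫ ≠ 0 := by simpa [inner_self_eq_zero] using h
  simp only [sref, cpair, inner_sub_left, inner_smul_left, RCLike.conj_to_real]
  have hc : (2 * (⟪v, α⟫ - 2 * ⟪v, α⟫ / ⟪α, α⟫ * ⟪α, α⟫) / ⟪α, α⟫) = -(2 * ⟪v, α⟫ / ⟪α, α⟫) := by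
    field_simp
    ring
  rw [hc]
  module

end Basics

section Ortho
variable {V : Type*} [NormedAddCommGroup V] [InnerProductSpace ℝ V]

/-- An orthogonal (inner-product-preserving linear) self-map. -/
def Ortho (f : V → V) : Prop :=
  (∀ a b, f (a + b) = f a + f b) ∧ (∀ (r : ℝ) (a : V), f (r • a) = r • f a) ∧
    (∀ a b, ⟪f a, f b⟫ = ⟪a, b⟫)

lemma Ortho.id : Ortho (id : V → V) := ⟨fun _ _ => rfl, fun _ _ => rfl, fun _ _ => rfl⟩

lemma Ortho.comp {f g : V → V} (hf : Ortho f) (hg : Ortho g) : Ortho (f ∘ g) :=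
  ⟨fun a b => by simp [Function.comp, hg.1, hf.1],
   fun r a => by simp [Function.comp, hg.2.1, hf.2.1],
   fun a b => by simp [Function.comp, hf.2.2, hg.2.2]⟩

lemma ortho_sref {α : V} (h : α ≠ 0) : Ortho (sref α) := by
  refine ⟨fun a b => ?_, fun r a => ?_, inner_sref_sref h⟩
  · rw [sref_apply, sref_apply, sref_apply, cpair_add_left]; module
  · rw [sref_apply, sref_apply, cpair_smul_left]; module

lemma Ortho.map_zero {f : V → V} (hf : Ortho f) : f 0 = 0 := by
  have := hf.2.1 0 0; simpa using this

lemma Ortho.map_neg {f : V → V} (hf : Ortho f) (a : V) : f (-a) = -f a := by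
  have := hf.2.1 (-1) a; simpa using this

lemma Ortho.map_sub {f : V → V} (hf : Ortho f) (a b : V) : f (a - b) = f a - f b := by
  rw [sub_eq_add_neg, hf.1, hf.map_neg, ← sub_eq_add_neg]

lemma Ortho.injective {f : V → V} (hf : Ortho f) : Function.Injective f := by
  intro a b hab
  have h : ⟪f (a - b), f (a - b)⟫ = ⟪a - b, a - b⟫ := hf.2.2 _ _
  rw [hf.map_sub, hab, sub_self] at h
  have : ⟪a - b, a - b⟫ = 0 := by simpa using h.symm
  rw [inner_self_eq_zero] at this
  exact sub_eq_zero.mp this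

lemma Ortho.cpair_map {f : V → V} (hf : Ortho f) (u v : V) :
    cpair (f u) (f v) = cpair u v := by
  simp only [cpair, hf.2.2]

lemma Ortho.map_sum {ι : Type*} {f : V → V} (hf : Ortho f) (s : Finset ι) (g : ι → V) :
    f (∑ i ∈ s, g i) = ∑ i ∈ s, f (g i) := by
  classical
  induction s using Finset.induction with
  | empty => simpa using hf.map_zero
  | insert a s' h ih => rw [Finset.sum_insert h, hf.1, ih, Finset.sum_insert h]

lemma Ortho.sref_comm {f : V → V} (hf : Ortho f) (α x : V) :
    f (sref α x) = sref (f α) (f x) := by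
  rw [sref_apply, sref_apply, hf.map_sub, hf.2.1, hf.cpair_map]

end Ortho


section WordProd
variable {V : Type*} [NormedAddCommGroup V] [InnerProductSpace ℝ V]

lemma wordProd_nil : RCRS.wordProd ([] : List V) = id := rfl

lemma wordProd_cons (γ : V) (l : List V) : RCRS.wordProd (γ :: l) = sref γ ∘ RCRS.wordProd l := rfl

lemma wordProd_append (l₁ l₂ : List V) :
    RCRS.wordProd (l₁ ++ l₂) = RCRS.wordProd l₁ ∘ RCRS.wordProd l₂ := by
  induction l₁ with
  | nil => rfl
  | cons a t ih => simp [wordProd_cons, ih]; rfl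

lemma ortho_wordProd {l : List V} (h : ∀ γ ∈ l, γ ≠ 0) : Ortho (RCRS.wordProd l) := by
  induction l with
  | nil => exact Ortho.id
  | cons a t ih =>
      rw [wordProd_cons]
      exact (ortho_sref (h a (List.mem_cons_self))).comp
        (ih fun γ hγ => h γ (List.mem_cons_of_mem a hγ))

lemma wordProd_fix {l : List V} {v : V} (h : ∀ γ ∈ l, ⟪v, γ⟫ = 0) : RCRS.wordProd l v = v := by
  induction l with
  | nil => rfl
  | cons a t ih =>
      rw [wordProd_cons]
      simp only [Function.comp_apply]
      rw [ih fun γ hγ => h γ (List.mem_cons_of_mem a hγ),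
        sref_fix (h a (List.mem_cons_self))]

end WordProd

set_option linter.unusedSectionVars false

namespace RCRS

variable {V : Type*} [NormedAddCommGroup V] [InnerProductSpace ℝ V] [DecidableEq V] (Φ : RCRS V)

lemma mem_posRoots {β : V} :
    β ∈ Φ.posRoots ↔ β ∈ Φ.roots ∧ ∃ c : V → ℤ, (∀ α ∈ Φ.simple, 0 ≤ c α) ∧
      β = ∑ α ∈ Φ.simple, (c α : ℝ) • α := by
  classical
  simp [posRoots, Finset.mem_filter]

lemma mem_posRootsOf {I : Finset V} {β : V} :
    β ∈ Φ.posRootsOf I ↔ β ∈ Φ.posRoots ∧ ∃ c : V → ℤ, β = ∑ α ∈ I, (c α : ℝ) • α := by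
  classical
  simp [posRootsOf, Finset.mem_filter]

variable {Φ}

lemma root_ne_zero {α : V} (h : α ∈ Φ.roots) : α ≠ 0 := fun h0 => Φ.zero_not_mem (h0 ▸ h)

lemma neg_root_mem {α : V} (h : α ∈ Φ.roots) : -α ∈ Φ.roots := by
  have := Φ.reflect_mem α h α h
  rwa [sref_self (root_ne_zero h)] at this

/-- Uniqueness of coefficients along the simple roots. -/
lemma coeffs_unique {f g : V → ℝ}
    (h : ∑ α ∈ Φ.simple, f α • α = ∑ α ∈ Φ.simple, g α • α) :
    ∀ α ∈ Φ.simple, f α = g α := by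
  classical
  have hli := linearIndependent_iff'.mp Φ.simple_indep
  have hsum : ∑ i ∈ Φ.simple.attach, (f i.1 - g i.1) • (i.1 : V) = 0 := by
    have h1 : ∑ i ∈ Φ.simple.attach, (f i.1 - g i.1) • (i.1 : V)
        = ∑ α ∈ Φ.simple, (f α - g α) • α :=
      Finset.sum_attach Φ.simple (fun α => (f α - g α) • α)
    rw [h1]
    simp only [sub_smul, Finset.sum_sub_distrib, h, sub_self]
  intro α hα
  have := hli Φ.simple.attach (fun i => f i.1 - g i.1) hsum ⟨α, hα⟩ (Finset.mem_attach _ _)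
  simp only at this
  linarith

/-- A root which is a nonnegative real combination of the simple roots is positive. -/
lemma pos_of_nonneg_coeffs {β : V} (hβ : β ∈ Φ.roots) {f : V → ℝ}
    (hf : ∀ α ∈ Φ.simple, 0 ≤ f α) (h : β = ∑ α ∈ Φ.simple, f α • α) :
    β ∈ Φ.posRoots := by
  obtain ⟨c, hc, hrep⟩ := Φ.exists_coeffs β hβ
  have huniq : ∀ α ∈ Φ.simple, (c α : ℝ) = f α :=
    coeffs_unique (by rw [← hrep, ← h])
  rcases hc with hpos | hneg
  · exact (Φ.mem_posRoots).mpr ⟨hβ, c, hpos, hrep⟩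
  · -- all coefficients are 0, β = 0, contradiction
    exfalso
    have : β = 0 := by
      rw [hrep]
      apply Finset.sum_eq_zero
      intro α hα
      have h1 : (c α : ℝ) ≤ 0 := by exact_mod_cast hneg α hα
      have h2 : (0:ℝ) ≤ (c α : ℝ) := (huniq α hα) ▸ hf α hα
      have : (c α : ℝ) = 0 := le_antisymm h1 h2
      rw [this, zero_smul]
    exact Φ.zero_not_mem (this ▸ hβ)

/-- Extend a sum over `I ⊆ simple` to a sum over `simple`. -/
lemma sum_extend {I : Finset V} (hI : I ⊆ Φ.simple) (f : V → ℝ) :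
    ∑ α ∈ I, f α • α = ∑ α ∈ Φ.simple, (if α ∈ I then f α else 0) • α := by
  have h0 : ∀ α ∈ Φ.simple, α ∉ I → (if α ∈ I then f α else 0) • α = 0 := by
    intro α _ hα; simp [hα]
  rw [← Finset.sum_subset hI h0]
  exact Finset.sum_congr rfl (fun α hα => by simp [hα])

/-- A root which is a nonnegative real combination of `I ⊆ simple` lies in `R_I⁺`. -/
lemma mem_posRootsOf_of_nonneg_coeffs {I : Finset V} (hI : I ⊆ Φ.simple) {β : V}
    (hβ : β ∈ Φ.roots) {f : V → ℝ} (hf : ∀ α ∈ I, 0 ≤ f α)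
    (h : β = ∑ α ∈ I, f α • α) : β ∈ Φ.posRootsOf I := by
  have hrep : β = ∑ α ∈ Φ.simple, (if α ∈ I then f α else 0) • α := by
    rw [h, sum_extend hI]
  have hpos : β ∈ Φ.posRoots := by
    apply pos_of_nonneg_coeffs hβ _ hrep
    intro α _
    by_cases hα : α ∈ I <;> simp [hα]
    exact hf α hα
  -- integer coefficients over I: use the canonical integer coefficients
  obtain ⟨hroot, c, hc, hcrep⟩ := (Φ.mem_posRoots).mp hpos
  refine (Φ.mem_posRootsOf).mpr ⟨hpos, c, ?_⟩
  have huniq : ∀ α ∈ Φ.simple, (c α : ℝ) = (if α ∈ I then f α else 0) :=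
    coeffs_unique (by rw [← hcrep, ← hrep])
  rw [hcrep, Finset.sum_subset hI]
  intro α hα hαI
  have := huniq α hα
  rw [if_neg hαI] at this
  rw [this, zero_smul]

lemma not_pos_and_neg {β : V} (h : β ∈ Φ.posRoots) : -β ∉ Φ.posRoots := by
  intro hneg
  obtain ⟨hr, c, hc, hrep⟩ := (Φ.mem_posRoots).mp h
  obtain ⟨hr', c', hc', hrep'⟩ := (Φ.mem_posRoots).mp hneg
  have hsum : ∑ α ∈ Φ.simple, ((c α : ℝ) + (c' α : ℝ)) • α = ∑ α ∈ Φ.simple, (0:ℝ) • α := by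
    simp only [add_smul, Finset.sum_add_distrib, ← hrep, ← hrep']
    simp
  have := coeffs_unique hsum
  have hzero : ∀ α ∈ Φ.simple, (c α : ℝ) = 0 := by
    intro α hα
    have h1 := this α hα
    have h2 : (0:ℝ) ≤ (c α : ℝ) := by exact_mod_cast hc α hα
    have h3 : (0:ℝ) ≤ (c' α : ℝ) := by exact_mod_cast hc' α hα
    linarith
  have : β = 0 := by
    rw [hrep]; apply Finset.sum_eq_zero; intro α hα; rw [hzero α hα, zero_smul]
  exact Φ.zero_not_mem (this ▸ hr)

lemma neg_mem_posRoots_of_not_pos {β : V} (hβ : β ∈ Φ.roots) (h : β ∉ Φ.posRoots) :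
    -β ∈ Φ.posRoots := by
  obtain ⟨c, hc, hrep⟩ := Φ.exists_coeffs β hβ
  rcases hc with hpos | hneg
  · exact absurd ((Φ.mem_posRoots).mpr ⟨hβ, c, hpos, hrep⟩) h
  · refine (Φ.mem_posRoots).mpr ⟨neg_root_mem hβ, fun α => -c α, fun α hα => by
      simpa using hneg α hα, ?_⟩
    rw [hrep, ← Finset.sum_neg_distrib]
    apply Finset.sum_congr rfl
    intro α _
    push_cast
    module

lemma simple_mem_posRoots {α : V} (hα : α ∈ Φ.simple) : α ∈ Φ.posRoots := by
  refine (Φ.mem_posRoots).mpr ⟨Φ.simple_subset hα, fun δ => if δ = α then 1 else 0, ?_, ?_⟩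
  · intro δ _; by_cases h : δ = α <;> simp [h]
  · rw [eq_comm]
    have : ∀ δ ∈ Φ.simple, (((if δ = α then (1:ℤ) else 0) : ℤ) : ℝ) • δ
        = if δ = α then δ else 0 := by
      intro δ _; split <;> simp
    rw [Finset.sum_congr rfl this, Finset.sum_ite_eq' Φ.simple α (fun δ => δ), if_pos hα]

lemma mem_posRootsOf_of_mem {I : Finset V} (hI : I ⊆ Φ.simple) {α : V} (hα : α ∈ I) :
    α ∈ Φ.posRootsOf I := by
  apply mem_posRootsOf_of_nonneg_coeffs hI (Φ.simple_subset (hI hα))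
    (f := fun δ => if δ = α then 1 else 0)
  · intro δ _; by_cases h : δ = α <;> simp [h]
  · rw [eq_comm]
    have : ∀ δ ∈ I, (fun δ => if δ = α then (1:ℝ) else 0) δ • δ = if δ = α then δ else 0 := by
      intro δ _; dsimp only; split <;> simp_all
    rw [Finset.sum_congr rfl this, Finset.sum_ite_eq' I α (fun δ => δ), if_pos hα]

end RCRS
set_option linter.unusedSectionVars false
set_option maxHeartbeats 1000000

namespace RCRS

variable {V : Type*} [NormedAddCommGroup V] [InnerProductSpace ℝ V] [DecidableEq V] {Φ : RCRS V}

lemma posRoots_subset : Φ.posRoots ⊆ Φ.roots := fun β hβ => ((Φ.mem_posRoots).mp hβ).1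

lemma posRootsOf_subset {I : Finset V} : Φ.posRootsOf I ⊆ Φ.posRoots :=
  fun β hβ => ((Φ.mem_posRootsOf).mp hβ).1

/-- Lemma A: the reflection in a simple root permutes the other positive roots. -/
lemma sref_simple_pos {γ : V} (hγ : γ ∈ Φ.simple) {β : V} (hβ : β ∈ Φ.posRoots)
    (hne : β ≠ γ) : sref γ β ∈ Φ.posRoots := by
  have hγr : γ ∈ Φ.roots := Φ.simple_subset hγ
  obtain ⟨hβr, c, hc, hrep⟩ := (Φ.mem_posRoots).mp hβ
  obtain ⟨k, hk⟩ := Φ.crystallographic γ hγr β hβr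
  -- find δ ∈ simple, δ ≠ γ with 0 < c δ
  have hδ : ∃ δ ∈ Φ.simple, δ ≠ γ ∧ 0 < c δ := by
    by_contra hcon
    push_neg at hcon
    have hβγ : β = (c γ : ℝ) • γ := by
      rw [hrep]
      rw [Finset.sum_eq_single_of_mem γ hγ]
      intro δ hδs hδne
      have h1 := hcon δ hδs hδne
      have h2 := hc δ hδs
      have : c δ = 0 := le_antisymm h1 h2
      rw [this]; simp
    have := Φ.reduced γ hγr (c γ : ℝ) (by rw [← hβγ]; exact hβr)
    rcases this with h1 | h1
    · exact hne (by rw [hβγ, h1, one_smul])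
    · have : (0:ℝ) ≤ (c γ : ℝ) := by exact_mod_cast hc γ hγ
      rw [h1] at this; linarith
  obtain ⟨δ, hδs, hδne, hδpos⟩ := hδ
  -- sref γ β as combination
  have hrep2 : sref γ β = ∑ α ∈ Φ.simple, ((fun α => ((c α - if α = γ then k else 0 : ℤ) : ℝ)) α) • α := by
    rw [sref_apply, hk, hrep]
    have : ∑ α ∈ Φ.simple, ((c α - if α = γ then k else 0 : ℤ) : ℝ) • α
        = ∑ α ∈ Φ.simple, ((c α : ℝ) • α - (if α = γ then (k:ℝ) else 0) • α) := by
      apply Finset.sum_congr rfl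
      intro α _
      push_cast
      split <;> module
    rw [this, Finset.sum_sub_distrib]
    congr 1
    have : ∀ α ∈ Φ.simple, (if α = γ then (k:ℝ) else 0) • α = if α = γ then (k:ℝ) • α else 0 := by
      intro α _; split <;> simp
    rw [Finset.sum_congr rfl this, Finset.sum_ite_eq' Φ.simple γ (fun α => (k:ℝ) • α), if_pos hγ]
  have hsr : sref γ β ∈ Φ.roots := Φ.reflect_mem γ hγr β hβr
  -- compare with canonical coefficients
  obtain ⟨e, he, herep⟩ := Φ.exists_coeffs _ hsr
  have huniq := coeffs_unique (Φ := Φ) (f := fun α => (e α : ℝ))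
    (g := fun α => ((c α - if α = γ then k else 0 : ℤ) : ℝ)) (by rw [← herep, ← hrep2])
  rcases he with hepos | heneg
  · exact (Φ.mem_posRoots).mpr ⟨hsr, e, hepos, herep⟩
  · exfalso
    have h1 := huniq δ hδs
    simp only [if_neg hδne, sub_zero] at h1
    have h2 : (e δ : ℝ) ≤ 0 := by exact_mod_cast heneg δ hδs
    have h3 : (0:ℝ) < (c δ : ℝ) := by exact_mod_cast hδpos
    rw [h1] at h2
    linarith

/-- Lemma A': version for a parabolic subsystem. -/
lemma sref_simple_posOf {I : Finset V} (hI : I ⊆ Φ.simple) {γ : V} (hγ : γ ∈ I) {β : V}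
    (hβ : β ∈ Φ.posRootsOf I) (hne : β ≠ γ) : sref γ β ∈ Φ.posRootsOf I := by
  obtain ⟨hβp, c, hrep⟩ := (Φ.mem_posRootsOf).mp hβ
  have hγr : γ ∈ Φ.roots := Φ.simple_subset (hI hγ)
  have hβr : β ∈ Φ.roots := posRoots_subset hβp
  obtain ⟨k, hk⟩ := Φ.crystallographic γ hγr β hβr
  refine (Φ.mem_posRootsOf).mpr ⟨sref_simple_pos (hI hγ) hβp hne,
    fun α => c α - if α = γ then k else 0, ?_⟩
  rw [sref_apply, hk, hrep]
  have : ∑ α ∈ I, ((c α - if α = γ then k else 0 : ℤ) : ℝ) • α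
      = ∑ α ∈ I, ((c α : ℝ) • α - (if α = γ then (k:ℝ) else 0) • α) := by
    apply Finset.sum_congr rfl
    intro α _
    push_cast
    split <;> module
  rw [this, Finset.sum_sub_distrib]
  congr 1
  have : ∀ α ∈ I, (if α = γ then (k:ℝ) else 0) • α = if α = γ then (k:ℝ) • α else 0 := by
    intro α _; split <;> simp
  rw [Finset.sum_congr rfl this, Finset.sum_ite_eq' I γ (fun α => (k:ℝ) • α), if_pos hγ]

lemma wordProd_root {l : List V} (hl : ∀ γ ∈ l, γ ∈ Φ.roots) {β : V} (hβ : β ∈ Φ.roots) :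
    wordProd l β ∈ Φ.roots := by
  induction l with
  | nil => exact hβ
  | cons a t ih =>
      rw [wordProd_cons]
      exact Φ.reflect_mem a (hl a (List.mem_cons_self)) _
        (ih fun γ hγ => hl γ (List.mem_cons_of_mem a hγ))

lemma wordProd_shift {I : Finset V} {l : List V} (hl : ∀ γ ∈ l, γ ∈ I) (v : V) :
    ∃ f : V → ℝ, wordProd l v = v + ∑ α ∈ I, f α • α := by
  induction l with
  | nil => exact ⟨0, by simp [wordProd_nil]⟩
  | cons a t ih =>
      obtain ⟨f, hf⟩ := ih (fun γ hγ => hl γ (List.mem_cons_of_mem a hγ))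
      have ha : a ∈ I := hl a (List.mem_cons_self)
      refine ⟨fun α => f α - if α = a then cpair (v + ∑ α ∈ I, f α • α) a else 0, ?_⟩
      rw [wordProd_cons]
      simp only [Function.comp_apply]
      rw [sref_apply, hf]
      set c := cpair (v + ∑ α ∈ I, f α • α) a with hc
      have : ∑ α ∈ I, (f α - if α = a then c else 0) • α
          = ∑ α ∈ I, (f α • α - (if α = a then c else 0) • α) := by
        apply Finset.sum_congr rfl; intro α _; module
      rw [this, Finset.sum_sub_distrib]
      have : ∀ α ∈ I, (if α = a then c else 0) • α = if α = a then c • α else 0 := by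
        intro α _; split <;> simp
      rw [Finset.sum_congr rfl this, Finset.sum_ite_eq' I a (fun α => c • α), if_pos ha]
      abel

/-- The deletion lemma (Lemma B). -/
lemma deletion {I : Finset V} (hI : I ⊆ Φ.simple) :
    ∀ l : List V, (∀ γ ∈ l, γ ∈ I) → ∀ α ∈ I, wordProd l α ∉ Φ.posRoots →
    ∃ l' : List V, (∀ γ ∈ l', γ ∈ I) ∧ l'.length + 1 = l.length ∧
      wordProd l' = wordProd l ∘ sref α := by
  intro l
  induction l with
  | nil =>
      intro _ α hα hneg
      exact absurd (simple_mem_posRoots (Φ := Φ) (hI hα)) hneg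
  | cons γ t ih =>
      intro hl α hα hneg
      have hγI : γ ∈ t.cons γ := List.mem_cons_self
      have hγ : γ ∈ I := hl γ hγI
      have ht : ∀ δ ∈ t, δ ∈ I := fun δ hδ => hl δ (List.mem_cons_of_mem γ hδ)
      have htr : ∀ δ ∈ t, δ ≠ 0 := fun δ hδ => root_ne_zero (Φ.simple_subset (hI (ht δ hδ)))
      have hOrth : Ortho (wordProd t) := ortho_wordProd htr
      have hγ0 : γ ≠ 0 := root_ne_zero (Φ.simple_subset (hI hγ))
      rw [wordProd_cons] at hneg
      simp only [Function.comp_apply] at hneg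
      by_cases hu : wordProd t α ∈ Φ.posRoots
      · -- wordProd t α = γ
        have heq : wordProd t α = γ := by
          by_contra hne
          exact hneg (sref_simple_pos (hI hγ) hu hne)
        refine ⟨t, ht, by simp, ?_⟩
        funext x
        have h1 : wordProd (γ :: t) (sref α x) = sref γ (wordProd t (sref α x)) := rfl
        rw [Function.comp_apply, h1, hOrth.sref_comm, heq, sref_sref hγ0]
      · obtain ⟨t', ht', hlen, heq⟩ := ih ht α hα hu
        refine ⟨γ :: t', fun δ hδ => by
          rcases List.mem_cons.mp hδ with h | h
          · exact h ▸ hγ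
          · exact ht' δ h, by simp [← hlen], ?_⟩
        funext x
        have h1 : wordProd (γ :: t') x = sref γ (wordProd t' x) := rfl
        rw [h1, heq]
        rfl

lemma lengthWeyl_le {I : Finset V} {w : V → V} (l : List V) (hl : ∀ γ ∈ l, γ ∈ I)
    (hw : w = wordProd l) : lengthWeyl I w ≤ l.length :=
  Nat.sInf_le ⟨l, rfl, hl, hw⟩

lemma exists_min_word {I : Finset V} {w : V → V} (h : MemWeyl I w) :
    ∃ l : List V, l.length = lengthWeyl I w ∧ (∀ γ ∈ l, γ ∈ I) ∧ w = wordProd l := by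
  obtain ⟨l, hl, hw⟩ := h
  have hne : {n | ∃ l : List V, l.length = n ∧ (∀ γ ∈ l, γ ∈ I) ∧ w = wordProd l}.Nonempty :=
    ⟨l.length, l, rfl, hl, hw⟩
  exact Nat.sInf_mem hne

lemma memWeyl_comp_sref {I : Finset V} {u : V → V} (hu : MemWeyl I u) {α : V} (hα : α ∈ I) :
    MemWeyl I (u ∘ sref α) := by
  obtain ⟨l, hl, hw⟩ := hu
  refine ⟨l ++ [α], fun γ hγ => ?_, ?_⟩
  · rcases List.mem_append.mp hγ with h | h
    · exact hl γ h
    · simp at h; exact h ▸ hα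
  · rw [wordProd_append, hw]
    rfl

lemma length_lt_of_pos {I : Finset V} (hI : I ⊆ Φ.simple) {u : V → V} (hu : MemWeyl I u)
    {α : V} (hα : α ∈ I) (hpos : u α ∈ Φ.posRoots) :
    lengthWeyl I u + 1 ≤ lengthWeyl I (u ∘ sref α) := by
  have hα0 : α ≠ 0 := root_ne_zero (Φ.simple_subset (hI hα))
  have hw' : MemWeyl I (u ∘ sref α) := memWeyl_comp_sref hu hα
  obtain ⟨l', hlen', hl', heq'⟩ := exists_min_word hw'
  obtain ⟨lu, hlu, hwu⟩ := hu
  have hOrthu : Ortho u := hwu ▸ ortho_wordProd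
    (fun γ hγ => root_ne_zero (Φ.simple_subset (hI (hlu γ hγ))))
  have hneg : (u ∘ sref α) α ∉ Φ.posRoots := by
    have h1 : (u ∘ sref α) α = -(u α) := by
      rw [Function.comp_apply, sref_self hα0, hOrthu.map_neg]
    rw [h1]
    exact not_pos_and_neg hpos
  rw [heq'] at hneg
  obtain ⟨l'', hl'', hlen'', heq''⟩ := deletion hI l' hl' α hα hneg
  have hueq : u = wordProd l'' := by
    rw [heq'', ← heq']
    funext x
    simp only [Function.comp_apply]
    rw [sref_sref hα0]
  have := lengthWeyl_le l'' hl'' hueq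
  omega

lemma longest_neg {I : Finset V} (hI : I ⊆ Φ.simple) {w0 : V → V} (h : IsLongest I w0) :
    ∀ α ∈ I, w0 α ∉ Φ.posRoots := by
  intro α hα hpos
  have h1 := length_lt_of_pos hI h.1 hα hpos
  have h2 := h.2 _ (memWeyl_comp_sref h.1 hα)
  omega

lemma eq_id_of_pos {I : Finset V} (hI : I ⊆ Φ.simple) {u : V → V} (hu : MemWeyl I u)
    (h : ∀ α ∈ I, u α ∈ Φ.posRoots) : u = id := by
  obtain ⟨l, hlen, hl, heq⟩ := exists_min_word hu
  rcases List.eq_nil_or_concat l with rfl | ⟨t, α, rfl⟩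
  · rw [heq]; rfl
  · exfalso
    rw [List.concat_eq_append] at heq hlen
    have hα : α ∈ I := hl α (by simp)
    have hα0 : α ≠ 0 := root_ne_zero (Φ.simple_subset (hI hα))
    have ht : ∀ γ ∈ t, γ ∈ I := fun γ hγ => hl γ (by simp [hγ])
    have husref : u ∘ sref α = wordProd t := by
      rw [heq, wordProd_append]
      funext x
      simp only [Function.comp_apply]
      have : wordProd [α] (sref α x) = x := by
        show sref α (sref α x) = x
        rw [sref_sref hα0]
      rw [this]
    have h1' : lengthWeyl I (u ∘ sref α) ≤ t.length := lengthWeyl_le t ht husref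
    have h2 := length_lt_of_pos hI hu hα (h α hα)
    have h3 : t.length + 1 = lengthWeyl I u := by
      rw [← hlen]; simp
    omega

end RCRS
set_option linter.unusedSectionVars false
set_option maxHeartbeats 1000000

namespace RCRS

variable {V : Type*} [NormedAddCommGroup V] [InnerProductSpace ℝ V] [DecidableEq V] {Φ : RCRS V}

/-- A positive root which is a real combination of `I ⊆ simple` lies in `R_I⁺`. -/
lemma mem_posRootsOf_of_coeffs {I : Finset V} (hI : I ⊆ Φ.simple) {β : V}
    (hβ : β ∈ Φ.posRoots) (f : V → ℝ) (h : β = ∑ α ∈ I, f α • α) :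
    β ∈ Φ.posRootsOf I := by
  obtain ⟨hβr, c, hc, hrep⟩ := (Φ.mem_posRoots).mp hβ
  have huniq : ∀ α ∈ Φ.simple, (c α : ℝ) = (if α ∈ I then f α else 0) :=
    coeffs_unique (by rw [← hrep, ← sum_extend hI, ← h])
  refine (Φ.mem_posRootsOf).mpr ⟨hβ, c, ?_⟩
  rw [hrep, ← Finset.sum_subset hI]
  intro α hα hαI
  have := huniq α hα
  rw [if_neg hαI] at this
  rw [this, zero_smul]

/-- A root in the real span of `I ⊆ simple` is in `R_I⁺` up to sign. -/
lemma mem_or_neg_mem_posRootsOf {I : Finset V} (hI : I ⊆ Φ.simple) {β : V}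
    (hβ : β ∈ Φ.roots) (f : V → ℝ) (h : β = ∑ α ∈ I, f α • α) :
    β ∈ Φ.posRootsOf I ∨ -β ∈ Φ.posRootsOf I := by
  by_cases hp : β ∈ Φ.posRoots
  · exact Or.inl (mem_posRootsOf_of_coeffs hI hp f h)
  · right
    have hneg : -β ∈ Φ.posRoots := neg_mem_posRoots_of_not_pos hβ hp
    refine mem_posRootsOf_of_coeffs hI hneg (fun α => -f α) ?_
    rw [h, ← Finset.sum_neg_distrib]
    apply Finset.sum_congr rfl
    intro α _
    module

/-- Elements of `R_I⁺` have nonnegative real coefficients along `I`. -/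
lemma posRootsOf_coeffs {I : Finset V} (hI : I ⊆ Φ.simple) {β : V}
    (hβ : β ∈ Φ.posRootsOf I) :
    ∃ f : V → ℝ, (∀ α ∈ I, 0 ≤ f α) ∧ β = ∑ α ∈ I, f α • α := by
  obtain ⟨hβp, e, herep⟩ := (Φ.mem_posRootsOf).mp hβ
  obtain ⟨hβr, c, hc, hrep⟩ := (Φ.mem_posRoots).mp hβp
  have huniq : ∀ α ∈ Φ.simple, (c α : ℝ) = (if α ∈ I then (e α : ℝ) else 0) :=
    coeffs_unique (by rw [← hrep, ← sum_extend hI (fun α => (e α : ℝ)), ← herep])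
  refine ⟨fun α => (c α : ℝ), fun α hα => Int.cast_nonneg_iff.mpr (hc α (hI hα)), ?_⟩
  rw [hrep, ← Finset.sum_subset hI]
  intro α hα hαI
  have := huniq α hα
  rw [if_neg hαI] at this
  rw [this, zero_smul]

section W0
variable {I : Finset V} (hI : I ⊆ Φ.simple) {w0 : V → V} (hw : IsLongest I w0)

include hI hw

lemma w0_ortho : Ortho w0 := by
  obtain ⟨l, hl, hweq⟩ := hw.1
  exact hweq ▸ ortho_wordProd (fun γ hγ => root_ne_zero (Φ.simple_subset (hI (hl γ hγ))))

lemma w0_root {β : V} (hβ : β ∈ Φ.roots) : w0 β ∈ Φ.roots := by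
  obtain ⟨l, hl, hweq⟩ := hw.1
  exact hweq ▸ wordProd_root (fun γ hγ => Φ.simple_subset (hI (hl γ hγ))) hβ

lemma w0_shift (v : V) : ∃ f : V → ℝ, w0 v = v + ∑ α ∈ I, f α • α := by
  obtain ⟨l, hl, hweq⟩ := hw.1
  exact hweq ▸ wordProd_shift hl v

/-- The longest element sends each simple root in `I` to a negative root of `R_I`. -/
lemma w0_simple_neg {α : V} (hα : α ∈ I) : -(w0 α) ∈ Φ.posRootsOf I := by
  have hαr : α ∈ Φ.roots := Φ.simple_subset (hI hα)
  have hw0r : w0 α ∈ Φ.roots := w0_root hI hw hαr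
  have hnp : w0 α ∉ Φ.posRoots := longest_neg hI hw α hα
  obtain ⟨f, hf⟩ := w0_shift hI hw α
  have hrep : w0 α = ∑ δ ∈ I, ((if δ = α then 1 else 0) + f δ) • δ := by
    rw [hf]
    have : ∑ δ ∈ I, ((if δ = α then (1:ℝ) else 0) + f δ) • δ
        = ∑ δ ∈ I, ((if δ = α then (1:ℝ) else 0) • δ + f δ • δ) := by
      apply Finset.sum_congr rfl; intro δ _; module
    rw [this, Finset.sum_add_distrib]
    congr 1
    have : ∀ δ ∈ I, (if δ = α then (1:ℝ) else 0) • δ = if δ = α then δ else 0 := by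
      intro δ _; split <;> simp
    rw [Finset.sum_congr rfl this, Finset.sum_ite_eq' I α (fun δ => δ), if_pos hα]
  rcases mem_or_neg_mem_posRootsOf hI hw0r _ hrep with hmem | hmem
  · exact absurd (posRootsOf_subset hmem) hnp
  · exact hmem

/-- The longest element sends `R_I⁺` to `-R_I⁺`. -/
lemma w0_posRootsOf_neg {γ : V} (hγ : γ ∈ Φ.posRootsOf I) : -(w0 γ) ∈ Φ.posRootsOf I := by
  have hOrth : Ortho w0 := w0_ortho hI hw
  obtain ⟨f, hf, hrep⟩ := posRootsOf_coeffs hI hγ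
  have hγr : γ ∈ Φ.roots := posRoots_subset (posRootsOf_subset hγ)
  -- choose coefficients for each -(w0 α)
  have hchoice : ∀ α ∈ I, ∃ g : V → ℝ, (∀ δ ∈ I, 0 ≤ g δ) ∧ -(w0 α) = ∑ δ ∈ I, g δ • δ :=
    fun α hα => posRootsOf_coeffs hI (w0_simple_neg hI hw hα)
  choose g hg hgrep using hchoice
  have hkey : -(w0 γ) = ∑ δ ∈ I, (∑ α ∈ I.attach, f α.1 * g α.1 α.2 δ) • δ := by
    rw [hrep, hOrth.map_sum]
    have h1 : ∀ α ∈ I.attach, w0 (f α.1 • α.1) = f α.1 • w0 α.1 := fun α _ => hOrth.2.1 _ _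
    rw [← Finset.sum_attach I (fun α => w0 (f α • α)), Finset.sum_congr rfl h1,
      ← Finset.sum_neg_distrib]
    have h2 : ∀ α ∈ I.attach, -(f α.1 • w0 α.1) = ∑ δ ∈ I, (f α.1 * g α.1 α.2 δ) • δ := by
      intro α _
      rw [← smul_neg, hgrep α.1 α.2, Finset.smul_sum]
      apply Finset.sum_congr rfl
      intro δ _
      rw [smul_smul]
    rw [Finset.sum_congr rfl h2, Finset.sum_comm]
    apply Finset.sum_congr rfl
    intro δ _
    rw [Finset.sum_smul]
  have hnegroot : -(w0 γ) ∈ Φ.roots := neg_root_mem (w0_root hI hw hγr)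
  apply mem_posRootsOf_of_nonneg_coeffs hI hnegroot _ hkey
  intro δ hδ
  apply Finset.sum_nonneg
  intro α _
  exact mul_nonneg (hf α.1 α.2) (hg α.1 α.2 δ hδ)

/-- `w0` negates the sum of the roots in `R_I⁺`. -/
lemma w0_sum_posRootsOf : w0 (∑ γ ∈ Φ.posRootsOf I, γ) = -∑ γ ∈ Φ.posRootsOf I, γ := by
  have hOrth : Ortho w0 := w0_ortho hI hw
  set S := Φ.posRootsOf I with hS
  have hinj : Set.InjOn (fun γ => -(w0 γ)) S := fun a _ b _ hab => by
    simp only [neg_inj] at hab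
    exact hOrth.injective hab
  have himage : S.image (fun γ => -(w0 γ)) = S := by
    apply Finset.eq_of_subset_of_card_le
    · intro x hx
      obtain ⟨γ, hγ, rfl⟩ := Finset.mem_image.mp hx
      exact w0_posRootsOf_neg hI hw hγ
    · rw [Finset.card_image_of_injOn hinj]
  have hsum : ∑ γ ∈ S, -(w0 γ) = ∑ γ ∈ S, γ := by
    have h : ∑ x ∈ S.image (fun γ => -(w0 γ)), x = ∑ γ ∈ S, -(w0 γ) :=
      Finset.sum_image (fun x hx y hy hxy => hinj hx hy hxy)
    rw [himage] at h
    exact h.symm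
  rw [hOrth.map_sum S (fun γ => γ)]
  rw [← neg_neg (∑ γ ∈ S, w0 γ), ← Finset.sum_neg_distrib, hsum]

end W0

/-- `⟨2 ρ_I, α∨⟩ = 2` for `α ∈ I`. -/
lemma cpair_sum_posRootsOf {I : Finset V} (hI : I ⊆ Φ.simple) {α : V} (hα : α ∈ I) :
    cpair (∑ γ ∈ Φ.posRootsOf I, γ) α = 2 := by
  have hα0 : α ≠ 0 := root_ne_zero (Φ.simple_subset (hI hα))
  have hOrth : Ortho (sref α) := ortho_sref hα0
  set S := Φ.posRootsOf I with hS
  have hαS : α ∈ S := mem_posRootsOf_of_mem hI hα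
  have hinj : Set.InjOn (sref α) (S.erase α) := fun a _ b _ hab => hOrth.injective hab
  have himage : (S.erase α).image (sref α) = S.erase α := by
    apply Finset.eq_of_subset_of_card_le
    · intro x hx
      obtain ⟨γ, hγ, rfl⟩ := Finset.mem_image.mp hx
      have hγS : γ ∈ S := Finset.mem_of_mem_erase hγ
      have hγne : γ ≠ α := Finset.ne_of_mem_erase hγ
      refine Finset.mem_erase.mpr ⟨?_, sref_simple_posOf hI hα hγS hγne⟩
      intro heq
      have : γ = sref α (sref α γ) := (sref_sref hα0 γ).symm
      rw [heq, sref_self hα0] at this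
      have hγp : γ ∈ Φ.posRoots := posRootsOf_subset hγS
      have hαp : α ∈ Φ.posRoots := posRootsOf_subset hαS
      rw [this] at hγp
      exact not_pos_and_neg hαp hγp
    · rw [Finset.card_image_of_injOn hinj]
  have hsum : ∑ γ ∈ S.erase α, sref α γ = ∑ γ ∈ S.erase α, γ := by
    have h : ∑ x ∈ (S.erase α).image (sref α), x = ∑ γ ∈ S.erase α, sref α γ :=
      Finset.sum_image (fun x hx y hy hxy => hinj hx hy hxy)
    rw [himage] at h
    exact h.symm
  have h1 : sref α (∑ γ ∈ S, γ) = (∑ γ ∈ S, γ) - (2:ℝ) • α := by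
    rw [hOrth.map_sum S (fun γ => γ)]
    rw [← Finset.add_sum_erase S _ hαS, hsum, sref_self hα0,
      ← Finset.add_sum_erase S (fun γ => γ) hαS]
    module
  rw [sref_apply] at h1
  rw [sub_right_inj] at h1
  exact smul_left_injective ℝ hα0 h1

end RCRS
set_option linter.unusedSectionVars false
set_option maxHeartbeats 1000000

namespace RCRS

variable {V : Type*} [NormedAddCommGroup V] [InnerProductSpace ℝ V] [DecidableEq V] {Φ : RCRS V}

lemma w0_involution {I : Finset V} (hI : I ⊆ Φ.simple) {w0 : V → V} (hw : IsLongest I w0) :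
    w0 ∘ w0 = id := by
  have hOrth : Ortho w0 := w0_ortho hI hw
  obtain ⟨l, hl, hweq⟩ := hw.1
  have hmem : MemWeyl I (w0 ∘ w0) := by
    refine ⟨l ++ l, fun γ hγ => ?_, ?_⟩
    · rcases List.mem_append.mp hγ with h | h <;> exact hl γ h
    · rw [wordProd_append, ← hweq]
  apply eq_id_of_pos hI hmem
  intro α hα
  have h1 : -(w0 α) ∈ Φ.posRootsOf I := w0_simple_neg hI hw hα
  have h2 : -(w0 (-(w0 α))) ∈ Φ.posRootsOf I := w0_posRootsOf_neg hI hw h1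
  have h3 : (w0 ∘ w0) α = -(w0 (-(w0 α))) := by
    simp only [Function.comp_apply, hOrth.map_neg, neg_neg]
  rw [h3]
  exact posRootsOf_subset h2

lemma inner_fw {ϖ : V → V} (hϖ : Φ.IsFundamentalWeights ϖ) {α δ : V}
    (hα : α ∈ Φ.simple) (hδ : δ ∈ Φ.simple) :
    ⟪ϖ α, δ⟫ = if α = δ then ⟪δ, δ⟫ / 2 else 0 := by
  have hδ0 : δ ≠ 0 := root_ne_zero (Φ.simple_subset hδ)
  have hδδ : ⟪δ, δ⟫ ≠ 0 := by simpa [inner_self_eq_zero] using hδ0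
  have h := hϖ α hα δ hδ
  rw [cpair] at h
  by_cases hcase : α = δ
  · rw [if_pos hcase]
    rw [if_pos hcase] at h
    field_simp at h
    linarith
  · rw [if_neg hcase]
    rw [if_neg hcase] at h
    rcases div_eq_zero_iff.mp h with h' | h'
    · linarith
    · exact absurd h' hδδ

lemma inner_sum_fw {I : Finset V} (hI : I ⊆ Φ.simple) {ϖ : V → V}
    (hϖ : Φ.IsFundamentalWeights ϖ) {δ : V} (hδ : δ ∈ Φ.simple) :
    ⟪∑ α ∈ I, ϖ α, δ⟫ = if δ ∈ I then ⟪δ, δ⟫ / 2 else 0 := by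
  rw [sum_inner]
  have : ∀ α ∈ I, ⟪ϖ α, δ⟫ = if α = δ then ⟪δ, δ⟫ / 2 else 0 :=
    fun α hα => inner_fw hϖ (hI hα) hδ
  rw [Finset.sum_congr rfl this, Finset.sum_ite_eq' I δ (fun _ => ⟪δ, δ⟫ / 2)]

/-- Key computation: for a positive root `γ`, the pairing of `Σ_{α∈I} ϖ_α` with `γ∨`
vanishes iff `γ` is supported on `simple \ I`. -/
lemma cpair_fw_iff {I : Finset V} (hI : I ⊆ Φ.simple) {ϖ : V → V}
    (hϖ : Φ.IsFundamentalWeights ϖ) {γ : V} (hγ : γ ∈ Φ.posRoots) :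
    (cpair (∑ α ∈ I, ϖ α) γ = 0 ↔ γ ∈ Φ.posRootsOf (Φ.simple \ I)) := by
  obtain ⟨hγr, d, hd, hrep⟩ := (Φ.mem_posRoots).mp hγ
  have hγ0 : γ ≠ 0 := root_ne_zero hγr
  have hγγ' : ⟪γ, γ⟫ ≠ 0 := by simpa [inner_self_eq_zero] using hγ0
  have hγγ : (0:ℝ) < ⟪γ, γ⟫ := lt_of_le_of_ne real_inner_self_nonneg (Ne.symm hγγ')
  have hval : cpair (∑ α ∈ I, ϖ α) γ = (∑ δ ∈ I, (d δ : ℝ) * ⟪δ, δ⟫) / ⟪γ, γ⟫ := by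
    rw [cpair]
    congr 1
    conv_lhs => rw [hrep]
    rw [inner_sum]
    have h1 : ∀ δ ∈ Φ.simple, ⟪∑ α ∈ I, ϖ α, (d δ : ℝ) • δ⟫
        = (d δ : ℝ) * (if δ ∈ I then ⟪δ, δ⟫ / 2 else 0) := by
      intro δ hδ
      rw [real_inner_smul_right, inner_sum_fw hI hϖ hδ]
    rw [Finset.sum_congr rfl h1]
    have h2 : ∑ δ ∈ Φ.simple, (d δ : ℝ) * (if δ ∈ I then ⟪δ, δ⟫ / 2 else 0)
        = ∑ δ ∈ I, (d δ : ℝ) * (⟪δ, δ⟫ / 2) := by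
      rw [← Finset.sum_subset hI]
      · exact Finset.sum_congr rfl fun δ hδ => by rw [if_pos hδ]
      · intro δ _ hδI
        rw [if_neg hδI, mul_zero]
    rw [h2, Finset.mul_sum]
    apply Finset.sum_congr rfl
    intro δ _
    ring
  have hterm : ∀ δ ∈ I, (0:ℝ) ≤ (d δ : ℝ) * ⟪δ, δ⟫ := by
    intro δ hδ
    have h1 : (0:ℝ) ≤ (d δ : ℝ) := by exact_mod_cast hd δ (hI hδ)
    exact mul_nonneg h1 real_inner_self_nonneg
  have hzero_iff : (cpair (∑ α ∈ I, ϖ α) γ = 0) ↔ ∀ δ ∈ I, d δ = 0 := by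
    rw [hval, div_eq_zero_iff]
    constructor
    · rintro (h | h)
      · intro δ hδ
        have := (Finset.sum_eq_zero_iff_of_nonneg hterm).mp h δ hδ
        have hδ0 : δ ≠ 0 := root_ne_zero (Φ.simple_subset (hI hδ))
        have hδδ : ⟪δ, δ⟫ ≠ 0 := by simpa [inner_self_eq_zero] using hδ0
        have := mul_eq_zero.mp this
        rcases this with h' | h'
        · exact_mod_cast h'
        · exact absurd h' hδδ
      · linarith
    · intro h
      left
      apply Finset.sum_eq_zero
      intro δ hδ
      rw [h δ hδ]
      simp
  rw [hzero_iff]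
  constructor
  · intro h
    refine (Φ.mem_posRootsOf).mpr ⟨hγ, d, ?_⟩
    rw [hrep, ← Finset.sum_subset (Finset.sdiff_subset (s := Φ.simple) (t := I))]
    intro δ hδ hδnot
    have hδI : δ ∈ I := by
      by_contra hc
      exact hδnot (Finset.mem_sdiff.mpr ⟨hδ, hc⟩)
    rw [h δ hδI]
    simp
  · intro h δ hδ
    obtain ⟨_, e, herep⟩ := (Φ.mem_posRootsOf).mp h
    have hrep2 : γ = ∑ α ∈ Φ.simple, (if α ∈ Φ.simple \ I then (e α : ℝ) else 0) • α := by
      rw [herep, sum_extend (Finset.sdiff_subset (s := Φ.simple) (t := I))]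
    have huniq := coeffs_unique (Φ := Φ) (f := fun α => (d α : ℝ))
      (g := fun α => if α ∈ Φ.simple \ I then (e α : ℝ) else 0) (by rw [← hrep, ← hrep2])
    have h1 := huniq δ (hI hδ)
    have h2 : δ ∉ Φ.simple \ I := fun hc => (Finset.mem_sdiff.mp hc).2 hδ
    simp only [if_neg h2] at h1
    exact_mod_cast h1

end RCRS
/-- For a subset `I ⊆ S`, the longest element `w_{0,P}` of `W_P`, and
`β ∈ R⁺ \ R_I⁺`, one has `⟨Σ_{α ∈ I} ϖ_α − Σ_{γ ∈ R_I⁺} γ, β∨⟩ = 0` if and only if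
`w_{0,P}(β) ∈ R_{S\I}⁺`. -/
theorem cpair_eq_zero_iff {V : Type*} [NormedAddCommGroup V] [InnerProductSpace ℝ V] [DecidableEq V]
    (Φ : RCRS V)
    (I : Finset V) (hI : I ⊆ Φ.simple)
    (ϖ : V → V) (hϖ : Φ.IsFundamentalWeights ϖ)
    (w0P : V → V) (hw0P : RCRS.IsLongest I w0P) :
    ∀ β ∈ Φ.posRoots \ Φ.posRootsOf I,
      (cpair ((∑ α ∈ I, ϖ α) - ∑ γ ∈ Φ.posRootsOf I, γ) β = 0 ↔
        w0P β ∈ Φ.posRootsOf (Φ.simple \ I)) := by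
  intro β hβmem
  rw [Finset.mem_sdiff] at hβmem
  obtain ⟨hβpos, hβnot⟩ := hβmem
  have hβr : β ∈ Φ.roots := RCRS.posRoots_subset hβpos
  have hOrth : Ortho w0P := RCRS.w0_ortho hI hw0P
  set ρ2 := ∑ γ ∈ Φ.posRootsOf I, γ with hρ2
  set W := ∑ α ∈ I, ϖ α with hW
  have hzfix : w0P ((2:ℝ) • W - ρ2) = (2:ℝ) • W - ρ2 := by
    obtain ⟨l, hl, hweq⟩ := hw0P.1
    rw [hweq]
    apply wordProd_fix
    intro γ hγ
    have hγI : γ ∈ I := hl γ hγ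
    have h1 : ⟪W, γ⟫ = ⟪γ, γ⟫ / 2 := by
      have h := RCRS.inner_sum_fw hI hϖ (hI hγI)
      rw [if_pos hγI] at h
      exact h
    have hγ0 : γ ≠ 0 := RCRS.root_ne_zero (Φ.simple_subset (hI hγI))
    have hγγ : ⟪γ, γ⟫ ≠ 0 := by simpa [inner_self_eq_zero] using hγ0
    have h2 : ⟪ρ2, γ⟫ = ⟪γ, γ⟫ := by
      have hc := RCRS.cpair_sum_posRootsOf hI hγI
      rw [cpair] at hc
      field_simp at hc
      linarith
    rw [inner_sub_left, real_inner_smul_left, h1, h2]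
    ring
  have hρneg : w0P ρ2 = -ρ2 := RCRS.w0_sum_posRootsOf hI hw0P
  have hxw : w0P W = W - ρ2 := by
    have h1 : w0P ((2:ℝ) • W) = (2:ℝ) • w0P W := hOrth.2.1 _ _
    have h2 : (2:ℝ) • W = ((2:ℝ) • W - ρ2) + ρ2 := by abel
    have h3 : w0P ((2:ℝ) • W) = ((2:ℝ) • W - ρ2) + -ρ2 := by
      conv_lhs => rw [h2]
      rw [hOrth.1, hzfix, hρneg]
    have h4 : (2:ℝ) • w0P W = (2:ℝ) • (W - ρ2) := by
      rw [← h1, h3]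
      module
    exact smul_right_injective V (by norm_num : (2:ℝ) ≠ 0) h4
  have hinv : w0P ∘ w0P = id := RCRS.w0_involution hI hw0P
  have hkey : cpair (W - ρ2) β = cpair W (w0P β) := by
    have hββ : β = w0P (w0P β) := (congrFun hinv β).symm
    rw [← hxw]
    conv_lhs => rw [hββ]
    exact hOrth.cpair_map W (w0P β)
  have hwβpos : w0P β ∈ Φ.posRoots := by
    obtain ⟨c, hc, hrep⟩ := ((Φ.mem_posRoots).mp hβpos).2
    have hδ : ∃ δ ∈ Φ.simple, δ ∉ I ∧ 0 < c δ := by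
      by_contra hcon
      push_neg at hcon
      apply hβnot
      apply RCRS.mem_posRootsOf_of_coeffs hI hβpos (fun α => (c α : ℝ))
      rw [hrep, ← Finset.sum_subset hI]
      intro δ hδs hδI
      have h1 := hcon δ hδs hδI
      have h2 := hc δ hδs
      have : c δ = 0 := le_antisymm h1 h2
      rw [this]
      simp
    obtain ⟨δ, hδs, hδI, hδpos⟩ := hδ
    obtain ⟨f, hf⟩ := RCRS.w0_shift hI hw0P β
    have hrep2 : w0P β = ∑ α ∈ Φ.simple, ((c α : ℝ) + (if α ∈ I then f α else 0)) • α := by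
      rw [hf, hrep, RCRS.sum_extend hI f, ← Finset.sum_add_distrib]
      apply Finset.sum_congr rfl
      intro α _
      module
    have hwr : w0P β ∈ Φ.roots := RCRS.w0_root hI hw0P hβr
    obtain ⟨e, he, herep⟩ := Φ.exists_coeffs _ hwr
    have huniq := RCRS.coeffs_unique (Φ := Φ) (f := fun α => (e α : ℝ))
      (g := fun α => (c α : ℝ) + (if α ∈ I then f α else 0)) (by rw [← herep, ← hrep2])
    rcases he with hepos | heneg
    · exact (Φ.mem_posRoots).mpr ⟨hwr, e, hepos, herep⟩
    · exfalso
      have h1 := huniq δ hδs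
      simp only [if_neg hδI, add_zero] at h1
      have h2 : (e δ : ℝ) ≤ 0 := by exact_mod_cast heneg δ hδs
      have h3 : (0:ℝ) < (c δ : ℝ) := by exact_mod_cast hδpos
      rw [h1] at h2
      linarith
  rw [hkey]
  exact RCRS.cpair_fw_iff hI hϖ hwβpos
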